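/- Let ℍ be the real quaternions, n ≥ 1, and let 𝔤 = sp(n+1) = {A ∈ ℍ^{(n+1)×(n+1)} : A + conj(A)ᵗ = 0} with bracket the matrix commutator and invariant inner product ⟨A,B⟩ = −Re(tr(A·B)). Let 𝔥 = {diag(C, 0) : C ∈ sp(n)} (sp(n) embedded in the upper-left n×n block), let 𝔪 = 𝔥^⊥, pr_𝔪 the orthogonal projection onto 𝔪, and 𝔪₀ = {v ∈ 𝔪 : ⁅w,v⁆ = 0 for all w ∈ 𝔥} (explicitly, 𝔪₀ = {diag(0_n, q) : q ∈ ℍ, conj(q) = −q}). Then there is no X ∈ 𝔪 \ {0} that is a Randers equigeodesic vector; i.e., for every X ∈ 𝔪 \ {0} there exist an invariant inner product α on 𝔪, a vector u ∈ 𝔪₀ with α(u,u) < 1, and Z ∈ 𝔪 such that α(pr_𝔪⁅X,Z⁆, X) + √(α(X,X))·α(pr_𝔪⁅X,Z⁆, u) ≠ 0. -/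

import Mathlib

open Matrix

attribute [local instance 100] LieRing.ofAssociativeRing

open scoped Quaternion

/-- The quaternion imaginary unit `i`. -/
noncomputable def qi : Quaternion ℝ := ⟨0, 1, 0, 0⟩

/-- The invariant inner product `⟨A,B⟩ = −Re(tr(A·B))` on quaternionic matrices. -/
noncomputable def ipH (n : ℕ) (A B : Matrix (Fin (n + 1)) (Fin (n + 1)) (Quaternion ℝ)) :
    ℝ := -((A * B).trace).re

def reAH : Quaternion ℝ →+ ℝ where
  toFun := QuaternionAlgebra.re
  map_zero' := rfl
  map_add' _ _ := rfl
lemma reTrAB {n : ℕ} (A B : Matrix (Fin (n+1)) (Fin (n+1)) (Quaternion ℝ)) :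
    ((A * B).trace).re = ∑ p, ∑ k, (A p k * B k p).re := by
  rw [show (A*B).trace = ∑ p, (A*B) p p from rfl]
  rw [show (∑ p, (A*B) p p).re = reAH (∑ p, (A*B) p p) from rfl, map_sum]
  refine Finset.sum_congr rfl fun p _ => ?_
  rw [Matrix.mul_apply]
  exact map_sum reAH _ _
lemma reTr_comm {n : ℕ} (A B : Matrix (Fin (n+1)) (Fin (n+1)) (Quaternion ℝ)) :
    ((A * B).trace).re = ((B * A).trace).re := by
  rw [reTrAB, reTrAB, Finset.sum_comm]
  refine Finset.sum_congr rfl fun p _ => Finset.sum_congr rfl fun k _ => ?_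
  simp only [Quaternion.re_mul]; ring

-- new
noncomputable def alph (n : ℕ) : Matrix (Fin (n+1)) (Fin (n+1)) (Quaternion ℝ) →ₗ[ℝ]
    Matrix (Fin (n+1)) (Fin (n+1)) (Quaternion ℝ) →ₗ[ℝ] ℝ :=
  LinearMap.mk₂ ℝ (ipH n)
    (fun A A' B => by simp [ipH, add_mul, Matrix.trace_add]; try ring)
    (fun r A B => by simp [ipH, Matrix.smul_mul, Matrix.trace_smul, Quaternion.re_smul]; try ring)
    (fun A B B' => by simp [ipH, mul_add, Matrix.trace_add]; try ring)
    (fun r A B => by simp [ipH, Matrix.mul_smul, Matrix.trace_smul, Quaternion.re_smul]; try ring)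

lemma alph_apply {n : ℕ} (A B : Matrix (Fin (n+1)) (Fin (n+1)) (Quaternion ℝ)) :
    alph n A B = ipH n A B := rfl

lemma ip_symm {n : ℕ} (A B : Matrix (Fin (n+1)) (Fin (n+1)) (Quaternion ℝ)) :
    ipH n A B = ipH n B A := by rw [ipH, ipH, reTr_comm]

lemma ip_inv {n : ℕ} (w u v : Matrix (Fin (n+1)) (Fin (n+1)) (Quaternion ℝ)) :
    ipH n ⁅w, u⁆ v + ipH n u ⁅w, v⁆ = 0 := by
  simp only [ipH, Ring.lie_def, sub_mul, mul_sub, Matrix.trace_sub]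
  have h1 : ((w * u * v).trace).re = ((u * (v * w)).trace).re := by
    rw [reTr_comm, ← mul_assoc, reTr_comm]
  have h2 : ((u * w * v).trace).re = ((u * (w * v)).trace).re := by rw [mul_assoc]
  simp only [Quaternion.re_sub]
  rw [h1, h2]; ring

lemma ip_lie_self {n : ℕ} (A Z : Matrix (Fin (n+1)) (Fin (n+1)) (Quaternion ℝ)) :
    ipH n ⁅A, Z⁆ A = 0 := by
  simp only [ipH, Ring.lie_def, sub_mul, Matrix.trace_sub, Quaternion.re_sub]
  have : ((A * Z * A).trace).re = ((Z * A * A).trace).re := by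
    rw [reTr_comm, mul_assoc, ← mul_assoc, reTr_comm]
  rw [this]; ring

lemma ip_pos {n : ℕ} (A : Matrix (Fin (n+1)) (Fin (n+1)) (Quaternion ℝ))
    (hskew : A + Aᴴ = 0) (hA : A ≠ 0) : 0 < ipH n A A := by
  have hentry : ∀ p q, A q p = -star (A p q) := by
    intro p q
    have := congrFun (congrFun hskew q) p
    simp only [Matrix.add_apply, Matrix.conjTranspose_apply, Matrix.zero_apply] at this
    linear_combination (norm := module) this
  have hterm : ∀ p k, (A p k * A k p).re = -Quaternion.normSq (A p k) := by
    intro p k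
    rw [hentry p k]
    simp only [Quaternion.re_mul, Quaternion.normSq_def', Quaternion.re_neg, Quaternion.imI_neg,
      Quaternion.imJ_neg, Quaternion.imK_neg, Quaternion.re_star, Quaternion.imI_star,
      Quaternion.imJ_star, Quaternion.imK_star]
    ring
  rw [ipH, reTrAB]
  simp only [hterm]
  simp only [Finset.sum_neg_distrib, neg_neg]
  obtain ⟨p, k, hpk⟩ : ∃ p k, A p k ≠ 0 := by
    by_contra h
    push_neg at h
    exact hA (by funext p q; exact h p q)
  have : (0:ℝ) < Quaternion.normSq (A p k) := by
    rcases lt_or_eq_of_le (Quaternion.normSq_nonneg (a := A p k)) with h|h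
    · exact h
    · exact absurd (Quaternion.normSq_eq_zero.mp h.symm) hpk
  refine Finset.sum_pos' (fun i _ => Finset.sum_nonneg fun j _ => Quaternion.normSq_nonneg) ⟨p, Finset.mem_univ p, ?_⟩
  exact Finset.sum_pos' (fun j _ => Quaternion.normSq_nonneg) ⟨k, Finset.mem_univ k, this⟩

lemma ip_std {n : ℕ} (A : Matrix (Fin (n+1)) (Fin (n+1)) (Quaternion ℝ))
    (i j : Fin (n+1)) (c : Quaternion ℝ) :
    ipH n A (Matrix.single i j c) = -(A j i * c).re := by
  rw [ipH, reTrAB]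
  congr 1
  rw [Finset.sum_eq_single j]
  · rw [Finset.sum_eq_single i]
    · simp [Matrix.single]
    · intro k _ hk; simp [Matrix.single, Ne.symm hk]
    · intro h; exact absurd (Finset.mem_univ i) h
  · intro p _ hp
    apply Finset.sum_eq_zero
    intro k _
    simp [Matrix.single, Ne.symm hp]
  · intro h; exact absurd (Finset.mem_univ j) h

-- conjTranspose entrywise skewness
lemma skew_entry {n : ℕ} {A : Matrix (Fin (n+1)) (Fin (n+1)) (Quaternion ℝ)}
    (hskew : A + Aᴴ = 0) (p q : Fin (n+1)) : A q p = -star (A p q) := by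
  have := congrFun (congrFun hskew q) p
  simp only [Matrix.add_apply, Matrix.conjTranspose_apply, Matrix.zero_apply] at this
  linear_combination (norm := module) this

lemma block_zero {n : ℕ} (X : Matrix (Fin (n+1)) (Fin (n+1)) (Quaternion ℝ))
    (hskew : X + Xᴴ = 0)
    (horth : ∀ W : Matrix (Fin (n+1)) (Fin (n+1)) (Quaternion ℝ), W + Wᴴ = 0 →
      (∀ p, W p (Fin.last n) = 0 ∧ W (Fin.last n) p = 0) → ipH n X W = 0) :
    ∀ p q, p ≠ Fin.last n → q ≠ Fin.last n → X p q = 0 := by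
  set l := Fin.last n
  set W : Matrix (Fin (n+1)) (Fin (n+1)) (Quaternion ℝ) :=
    Matrix.of fun p q => if p = l ∨ q = l then 0 else X p q with hW
  have hWskew : W + Wᴴ = 0 := by
    funext p q
    simp only [Matrix.add_apply, Matrix.conjTranspose_apply, Matrix.zero_apply, hW,
      Matrix.of_apply]
    by_cases h : p = l ∨ q = l
    · rw [if_pos h, if_pos (Or.comm.mp h), star_zero, add_zero]
    · push_neg at h
      rw [if_neg (by tauto), if_neg (by tauto)]
      have := congrFun (congrFun hskew p) q
      simpa using this
  have hWcond : ∀ p, W p l = 0 ∧ W l p = 0 := by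
    intro p; constructor <;> simp [hW]
  have h0 := horth W hWskew hWcond
  rw [ipH, reTrAB] at h0
  have hterm : ∀ p k, -((X p k * W k p).re) =
      if p = l ∨ k = l then 0 else Quaternion.normSq (X p k) := by
    intro p k
    by_cases h : p = l ∨ k = l
    · rw [if_pos h]
      have : W k p = 0 := by
        rcases h with h|h
        · simp [hW, h]
        · simp [hW, h]
      rw [this, mul_zero]; simp [Quaternion.re_zero]
    · rw [if_neg h]
      push_neg at h
      have hWkp : W k p = X k p := by rw [hW]; simp [Matrix.of_apply, h.1, h.2]
      rw [hWkp, skew_entry hskew p k]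
      simp only [Quaternion.re_mul, Quaternion.normSq_def', Quaternion.re_neg,
        Quaternion.imI_neg, Quaternion.imJ_neg, Quaternion.imK_neg, Quaternion.re_star,
        Quaternion.imI_star, Quaternion.imJ_star, Quaternion.imK_star]
      ring
  have h0' : ∑ p, ∑ k, (if p = l ∨ k = l then (0:ℝ) else Quaternion.normSq (X p k)) = 0 := by
    simp only [← hterm, Finset.sum_neg_distrib]
    linarith [h0]
  intro p q hp hq
  have hnn : ∀ p ∈ (Finset.univ : Finset (Fin (n+1))),
      ∀ k ∈ (Finset.univ : Finset (Fin (n+1))),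
      (0:ℝ) ≤ if p = l ∨ k = l then (0:ℝ) else Quaternion.normSq (X p k) := by
    intro p _ k _
    split
    · exact le_refl 0
    · exact Quaternion.normSq_nonneg
  have hin := (Finset.sum_eq_zero_iff_of_nonneg
    (fun p _ => Finset.sum_nonneg fun k hk => hnn p (Finset.mem_univ p) k hk)).mp h0' p
    (Finset.mem_univ p)
  have := (Finset.sum_eq_zero_iff_of_nonneg (hnn p (Finset.mem_univ p))).mp hin q
    (Finset.mem_univ q)
  rw [if_neg (by tauto)] at this
  exact Quaternion.normSq_eq_zero.mp this

lemma std_conjT {n : ℕ} (i j : Fin (n+1)) (c : Quaternion ℝ) :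
    (Matrix.single i j c)ᴴ = Matrix.single j i (star c) := by
  funext p q
  simp only [Matrix.conjTranspose_apply, Matrix.single, Matrix.of_apply, apply_ite,
    star_zero]
  by_cases h1 : i = q <;> by_cases h2 : j = p <;> simp [h1, h2]

lemma normSq_pos_of_ne {x : Quaternion ℝ} (hx : x ≠ 0) : 0 < Quaternion.normSq x := by
  rcases lt_or_eq_of_le (Quaternion.normSq_nonneg (a := x)) with h|h
  · exact h
  · exact absurd (Quaternion.normSq_eq_zero.mp h.symm) hx

/-- An invariant inner product on the subspace `𝔪` of the Lie algebra `L`, encoded as a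
bilinear form on `L` which is symmetric and positive definite on `𝔪`, and `ad 𝔥`-invariant
on `𝔪`. -/
def IsInvariantInnerOn {L : Type*} [LieRing L] [LieAlgebra ℝ L]
    (𝔥 𝔪 : Submodule ℝ L) (α : L →ₗ[ℝ] L →ₗ[ℝ] ℝ) : Prop :=
  (∀ u ∈ 𝔪, ∀ v ∈ 𝔪, α u v = α v u) ∧
  (∀ u ∈ 𝔪, u ≠ 0 → 0 < α u u) ∧
  (∀ w ∈ 𝔥, ∀ u ∈ 𝔪, ∀ v ∈ 𝔪, α ⁅w, u⁆ v + α u ⁅w, v⁆ = 0)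

set_option maxHeartbeats 1600000

/-- **The sphere `S^{4n+3} = Sp(n+1)/Sp(n)` has no Randers equigeodesic vectors.**
Here `𝔤 = sp(n+1) = {A : A + Aᴴ = 0}` with the commutator bracket and the invariant inner
product `⟨A,B⟩ = −Re(tr(A·B))`, `𝔥 = sp(n)` embedded in the upper-left block, `𝔪 = 𝔥ᗮ`
(inside `𝔤`), and `𝔪₀` the fixed-point set of `ad 𝔥` on `𝔪`.  For every `X ∈ 𝔪 \ {0}`
there are an invariant inner product `α` on `𝔪`, a vector `u ∈ 𝔪₀` with `α(u,u) < 1` and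
`Z ∈ 𝔪` violating the Randers geodesic-vector criterion. -/
theorem sp_n_plus_one_quotient_sp_n_has_no_randers_equigeodesic_vectors
    (n : ℕ) (hn : 1 ≤ n)
    (𝔥 : Submodule ℝ (Matrix (Fin (n + 1)) (Fin (n + 1)) (Quaternion ℝ)))
    (h𝔥 : ∀ W, W ∈ 𝔥 ↔
      (W + Wᴴ = 0 ∧ ∀ p : Fin (n + 1), W p (Fin.last n) = 0 ∧ W (Fin.last n) p = 0))
    (𝔪 : Submodule ℝ (Matrix (Fin (n + 1)) (Fin (n + 1)) (Quaternion ℝ)))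
    (h𝔪 : ∀ A, A ∈ 𝔪 ↔ (A + Aᴴ = 0 ∧ ∀ W ∈ 𝔥, ipH n A W = 0))
    (𝔪₀ : Submodule ℝ (Matrix (Fin (n + 1)) (Fin (n + 1)) (Quaternion ℝ)))
    (h𝔪₀ : ∀ v, v ∈ 𝔪₀ ↔ (v ∈ 𝔪 ∧ ∀ w ∈ 𝔥, ⁅w, v⁆ = 0))
    (pr : Matrix (Fin (n + 1)) (Fin (n + 1)) (Quaternion ℝ) →ₗ[ℝ]
      Matrix (Fin (n + 1)) (Fin (n + 1)) (Quaternion ℝ))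
    (hpr : ∀ A, A + Aᴴ = 0 → pr A ∈ 𝔪 ∧ A - pr A ∈ 𝔥) :
    ∀ X ∈ 𝔪, X ≠ 0 →
      ∃ α : Matrix (Fin (n + 1)) (Fin (n + 1)) (Quaternion ℝ) →ₗ[ℝ]
          Matrix (Fin (n + 1)) (Fin (n + 1)) (Quaternion ℝ) →ₗ[ℝ] ℝ,
        IsInvariantInnerOn 𝔥 𝔪 α ∧
          ∃ u ∈ 𝔪₀, α u u < 1 ∧
            ∃ Z ∈ 𝔪, α (pr ⁅X, Z⁆) X + Real.sqrt (α X X) * α (pr ⁅X, Z⁆) u ≠ 0 := by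
  intro X hX hX0
  set l : Fin (n+1) := Fin.last n with hl
  obtain ⟨hXskew, hXorth⟩ := (h𝔪 X).mp hX
  -- orthogonality of last-row/col std basis matrices to 𝔥
  have hstd_orth : ∀ (i j : Fin (n+1)) (c : Quaternion ℝ), (i = l ∨ j = l) →
      ∀ W ∈ 𝔥, ipH n (Matrix.single i j c) W = 0 := by
    intro i j c hij W hW
    obtain ⟨hWs, hWc⟩ := (h𝔥 W).mp hW
    rw [ip_symm, ip_std]
    rcases hij with h|h
    · rw [h, (hWc j).1]; simp
    · rw [h, (hWc i).2]; simp
  -- membership of diagonal-corner std matrices in 𝔪₀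
  have hstd_m0 : ∀ c : Quaternion ℝ, star c = -c → Matrix.single l l c ∈ 𝔪₀ := by
    intro c hc
    refine (h𝔪₀ _).mpr ⟨(h𝔪 _).mpr ⟨?_, hstd_orth l l c (Or.inl rfl)⟩, ?_⟩
    · rw [std_conjT, hc, Matrix.single, Matrix.single]
      funext p q
      simp only [Matrix.add_apply, Matrix.of_apply, Matrix.zero_apply]
      split <;> simp
    · intro w hw
      obtain ⟨hws, hwc⟩ := (h𝔥 w).mp hw
      have h1 : w * Matrix.single l l c = 0 := by
        funext p q
        by_cases hq : q = l
        · subst hq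
          rw [Matrix.mul_single_apply_same, (hwc p).1, zero_mul]
          rfl
        · simp [hq]
      have h2 : Matrix.single l l c * w = 0 := by
        funext p q
        by_cases hp : p = l
        · subst hp
          rw [Matrix.single_mul_apply_same, (hwc q).2, mul_zero]
          rfl
        · simp [hp]
      rw [Ring.lie_def, h1, h2, sub_zero]
  -- the block of X away from the last row/column vanishes
  have hblock : ∀ p q, p ≠ l → q ≠ l → X p q = 0 :=
    block_zero X hXskew (fun W h1 h2 => hXorth W ((h𝔥 W).mpr ⟨h1, h2⟩))
  -- find Z ∈ 𝔪 with nonzero corner of the bracket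
  obtain ⟨Z, hZ𝔪, hmne⟩ : ∃ Z, Z ∈ 𝔪 ∧ ⁅X, Z⁆ l l ≠ 0 := by
    have hqis : star qi = -qi := by
      ext <;> simp [Quaternion.re_star, Quaternion.imI_star, Quaternion.imJ_star, Quaternion.imK_star] <;> simp [qi]
    by_cases hcol : ∀ p, p ≠ l → X p l = 0
    · -- X is concentrated in the corner
      have hare : (X l l).re = 0 := by
        have h2 := congrArg QuaternionAlgebra.re (skew_entry hXskew l l)
        simp only [Quaternion.re_neg, Quaternion.re_star] at h2
        linarith
      have ha0 : X l l ≠ 0 := by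
        intro h
        apply hX0
        funext p q
        by_cases hp : p = l <;> by_cases hq : q = l
        · rw [hp, hq]; exact h
        · rw [hp, skew_entry hXskew q l, hcol q hq, star_zero, neg_zero]; rfl
        · rw [hq]; exact hcol p hp
        · exact hblock p q hp hq
      obtain ⟨b, hbs, hab⟩ : ∃ b : Quaternion ℝ,
          star b = -b ∧ X l l * b - b * X l l ≠ 0 := by
        by_cases hjk : (X l l).imJ = 0 ∧ (X l l).imK = 0
        · refine ⟨⟨0, 0, 1, 0⟩, by show star (⟨0, 0, 1, 0⟩ : ℍ[ℝ,-1,0,-1]) = -⟨0, 0, 1, 0⟩; ext <;> simp, ?_⟩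
          have haI : (X l l).imI ≠ 0 := by
            intro h; apply ha0; ext <;> simp [hare, h, hjk.1, hjk.2]
          intro h
          have h2 := congrArg QuaternionAlgebra.imK h
          erw [Quaternion.imK_sub, Quaternion.imK_mul, Quaternion.imK_mul] at h2
          apply haI
          norm_num at h2
          linarith
        · push_neg at hjk
          refine ⟨qi, hqis, ?_⟩
          intro h
          have hJ := congrArg QuaternionAlgebra.imJ h
          have hK := congrArg QuaternionAlgebra.imK h
          simp only [Quaternion.imJ_sub, Quaternion.imJ_mul, Quaternion.imJ_zero,
            Quaternion.imK_sub, Quaternion.imK_mul, Quaternion.imK_zero] at hJ hK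
          simp only [qi] at hJ hK
          norm_num at hJ hK
          rcases (em ((X l l).imJ = 0)) with h'|h'
          · exact hjk h' (by linarith)
          · exact h' (by linarith)
      refine ⟨Matrix.single l l b, ((h𝔪₀ _).mp (hstd_m0 b hbs)).1, ?_⟩
      have heq : ⁅X, Matrix.single l l b⁆ l l = X l l * b - b * X l l := by
        rw [Ring.lie_def, Matrix.sub_apply, Matrix.mul_single_apply_same,
          Matrix.single_mul_apply_same]
      rw [heq]; exact hab
    · -- some off-corner entry of the last column is nonzero
      push_neg at hcol
      obtain ⟨p₀, hp₀, hx⟩ := hcol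
      set x : Quaternion ℝ := X p₀ l with hxdef
      set w : Quaternion ℝ := x * qi with hwdef
      refine ⟨Matrix.single p₀ l w - Matrix.single l p₀ (star w), ?_, ?_⟩
      · refine (h𝔪 _).mpr ⟨?_, ?_⟩
        · rw [Matrix.conjTranspose_sub, std_conjT, std_conjT, star_star]
          abel
        · intro W hW
          have h1 : ipH n (Matrix.single p₀ l w
              - Matrix.single l p₀ (star w)) W =
              ipH n (Matrix.single p₀ l w) W
              - ipH n (Matrix.single l p₀ (star w)) W := by
            rw [← alph_apply, ← alph_apply, ← alph_apply, map_sub, LinearMap.sub_apply]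
          rw [h1, hstd_orth p₀ l w (Or.inr rfl) W hW, hstd_orth l p₀ (star w) (Or.inl rfl) W hW,
            sub_zero]
      · have heq : ⁅X, Matrix.single p₀ l w
            - Matrix.single l p₀ (star w)⁆ l l
            = X l p₀ * w + star w * x := by
          rw [Ring.lie_def, Matrix.mul_sub, Matrix.sub_mul, Matrix.sub_apply, Matrix.sub_apply,
            Matrix.sub_apply, Matrix.mul_single_apply_same,
            Matrix.single_mul_apply_same,
            Matrix.mul_single_apply_of_ne _ _ _ _ _ (Ne.symm hp₀),
            Matrix.single_mul_apply_of_ne _ _ _ _ _ (Ne.symm hp₀), ← hxdef]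
          noncomm_ring
        rw [heq]
        have hr : 0 < Quaternion.normSq x := normSq_pos_of_ne hx
        have hm' : X l p₀ * w + star w * x
            = -(((Quaternion.normSq x : ℝ) : Quaternion ℝ) * qi)
              - qi * ((Quaternion.normSq x : ℝ) : Quaternion ℝ) := by
          rw [skew_entry hXskew p₀ l, ← hxdef, hwdef, StarMul.star_mul, hqis]
          have hsm : star x * x = ((Quaternion.normSq x : ℝ) : Quaternion ℝ) :=
            Quaternion.star_mul_self x
          calc -star x * (x * qi) + -qi * star x * x
              = -((star x * x) * qi) + -qi * (star x * x) := by noncomm_ring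
            _ = _ := by rw [hsm]; noncomm_ring
        rw [hm']
        intro h
        have h2 := congrArg QuaternionAlgebra.imI h
        simp only [Quaternion.imI_sub, Quaternion.imI_neg, Quaternion.imI_mul,
          Quaternion.re_coe, Quaternion.imI_coe, Quaternion.imJ_coe, Quaternion.imK_coe,
          Quaternion.imI_zero] at h2
        simp only [qi] at h2
        norm_num at h2
        linarith
  -- common part
  set B := ⁅X, Z⁆ with hB
  obtain ⟨hZskew, hZorth⟩ := (h𝔪 Z).mp hZ𝔪
  have hXH : Xᴴ = -X := by linear_combination (norm := module) hXskew
  have hZH : Zᴴ = -Z := by linear_combination (norm := module) hZskew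
  have hBskew : B + Bᴴ = 0 := by
    rw [hB, Ring.lie_def]
    have h' : (X * Z - Z * X)ᴴ = Zᴴ * Xᴴ - Xᴴ * Zᴴ := by
      rw [Matrix.conjTranspose_sub, Matrix.conjTranspose_mul, Matrix.conjTranspose_mul]
    rw [h', hXH, hZH]
    noncomm_ring
  set m : Quaternion ℝ := B l l with hm
  have hmstar : star m = -m := by
    have := skew_entry hBskew l l
    rw [← hm] at this
    linear_combination (norm := module) this
  set S : ℝ := Quaternion.normSq m with hS
  have hS0 : 0 < S := normSq_pos_of_ne hmne
  have hmm : m * m = -((S : ℝ) : Quaternion ℝ) := by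
    have h' : m = -star m := by linear_combination (norm := module) hmstar
    nth_rewrite 1 [h']
    rw [neg_mul, Quaternion.star_mul_self, hS]
  set t : ℝ := (1 + S)⁻¹ with ht
  have h1S : (0:ℝ) < 1 + S := by linarith
  have ht0 : 0 < t := inv_pos.mpr h1S
  have ht1 : t * (1 + S) = 1 := inv_mul_cancel₀ (ne_of_gt h1S)
  set c : Quaternion ℝ := t • m with hc
  have hmre : m.re = 0 := by
    have := congrArg QuaternionAlgebra.re hmstar
    simp only [Quaternion.re_star, Quaternion.re_neg] at this
    linarith
  have hcs : star c = -c := by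
    rw [hc]
    ext <;>
      simp [Quaternion.re_smul, Quaternion.imI_smul, Quaternion.imJ_smul, Quaternion.imK_smul,
        hmre]
  have hu𝔪₀ : Matrix.single l l c ∈ 𝔪₀ := hstd_m0 c hcs
  have hcc : (c * c).re = t * t * (-S) := by
    rw [hc, smul_mul_assoc, mul_smul_comm, hmm]
    simp [Quaternion.re_smul, mul_assoc]
  have hmc : (m * c).re = t * (-S) := by
    rw [hc, mul_smul_comm, hmm]
    simp [Quaternion.re_smul]
  refine ⟨alph n, ⟨fun a _ b _ => ip_symm a b, fun a ha' ha => ip_pos a ((h𝔪 a).mp ha').1 ha,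
    fun w _ a _ b _ => ip_inv w a b⟩,
    Matrix.single l l c, hu𝔪₀, ?_, Z, hZ𝔪, ?_⟩
  · -- α u u < 1
    rw [alph_apply, ip_std, Matrix.single_apply_same, hcc]
    nlinarith [sq_nonneg (2 * t - 1), mul_pos ht0 hS0, sq_nonneg t]
  · -- the main inequality
    have hprB := hpr B hBskew
    have hsub : ∀ v, alph n (B - pr B) v = alph n B v - alph n (pr B) v := by
      intro v
      rw [map_sub, LinearMap.sub_apply]
    have hfirst : alph n (pr B) X = 0 := by
      have h2 : alph n (B - pr B) X = 0 := by
        rw [alph_apply, ip_symm]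
        exact hXorth _ hprB.2
      have h3 : alph n B X = 0 := ip_lie_self X Z
      have := hsub X
      rw [h2, h3] at this
      linarith
    have hsecond : alph n (pr B) (Matrix.single l l c) = t * S := by
      have h2 : alph n (B - pr B) (Matrix.single l l c) = 0 := by
        rw [alph_apply, ip_symm]
        exact hstd_orth l l c (Or.inl rfl) _ hprB.2
      have h3 : alph n B (Matrix.single l l c) = t * S := by
        rw [alph_apply, ip_std, ← hm, hmc]
        ring
      have := hsub (Matrix.single l l c)
      rw [h2, h3] at this
      linarith
    rw [hfirst, hsecond, zero_add]
    have hXX : 0 < alph n X X := ip_pos X hXskew hX0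
    have : 0 < Real.sqrt (alph n X X) * (t * S) :=
      mul_pos (Real.sqrt_pos.mpr hXX) (mul_pos ht0 hS0)
    exact ne_of_gt this
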